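/- arXiv:2303.13956 — 2 statements merged into one kernel-verified Lean document; each statement's English description precedes it below -/
import Mathlib

section
/- If f and g are C^3 functions on an open interval with nowhere-vanishing derivatives and S_f = S_g, then f is a Möbius transform of g, i.e., f = (a·g + b)/(c·g + d) for some constants with ad − bc ≠ 0. -/
noncomputable def schwP (f : ℝ → ℝ) : ℝ → ℝ := fun x => (Real.sqrt (deriv f x))⁻¹
noncomputable def schwP1 (f : ℝ → ℝ) : ℝ → ℝ := fun x =>
  -deriv (deriv f) x / (2 * Real.sqrt (deriv f x) * deriv f x)
noncomputable def schwP2 (f : ℝ → ℝ) : ℝ → ℝ := fun x =>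
  (-deriv (deriv (deriv f)) x * (2 * Real.sqrt (deriv f x) * deriv f x) -
      -deriv (deriv f) x *
        (2 * (deriv (deriv f) x / (2 * Real.sqrt (deriv f x))) * deriv f x +
          2 * Real.sqrt (deriv f x) * deriv (deriv f) x)) /
    (2 * Real.sqrt (deriv f x) * deriv f x) ^ 2

lemma hasDerivAt_schwP {f : ℝ → ℝ} {x : ℝ}
    (h2 : HasDerivAt (deriv f) (deriv (deriv f) x) x) (hpos : 0 < deriv f x) :
    HasDerivAt (schwP f) (schwP1 f x) x := by
  have hne : deriv f x ≠ 0 := ne_of_gt hpos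
  have hs : Real.sqrt (deriv f x) ≠ 0 := (Real.sqrt_pos.mpr hpos).ne'
  have hsq : Real.sqrt (deriv f x) ^ 2 = deriv f x := Real.sq_sqrt hpos.le
  have h := (h2.sqrt hne).inv hs
  convert h using 1
  · rfl
  · rfl
  · rfl
  unfold schwP1
  rw [← hsq]
  field_simp
  rw [Real.sqrt_sq (Real.sqrt_nonneg (deriv f x))]

lemma hasDerivAt_schwP1 {f : ℝ → ℝ} {x : ℝ}
    (h2 : HasDerivAt (deriv f) (deriv (deriv f) x) x)
    (h3 : HasDerivAt (deriv (deriv f)) (deriv (deriv (deriv f)) x) x)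
    (hpos : 0 < deriv f x) :
    HasDerivAt (schwP1 f) (schwP2 f x) x := by
  have hne : deriv f x ≠ 0 := ne_of_gt hpos
  have hs : Real.sqrt (deriv f x) ≠ 0 := (Real.sqrt_pos.mpr hpos).ne'
  have hd : HasDerivAt (fun y => 2 * Real.sqrt (deriv f y) * deriv f y)
      (2 * (deriv (deriv f) x / (2 * Real.sqrt (deriv f x))) * deriv f x +
        2 * Real.sqrt (deriv f x) * deriv (deriv f) x) x :=
    (((h2.sqrt hne).const_mul 2).mul h2)
  have hdne : 2 * Real.sqrt (deriv f x) * deriv f x ≠ 0 := by positivity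
  exact (h3.neg.div hd hdne)

lemma const_of_hasDerivAt_zero {I : Set ℝ} (hIopen : IsOpen I) (hIconv : Convex ℝ I)
    {A : ℝ → ℝ} (hA : ∀ x ∈ I, HasDerivAt A 0 x) {x y : ℝ} (hx : x ∈ I) (hy : y ∈ I) :
    A x = A y := by
  refine hIconv.is_const_of_fderivWithin_eq_zero
    (fun z hz => ((hA z hz).differentiableAt).differentiableWithinAt)
    (fun z hz => ?_) hx hy
  rw [fderivWithin_eq_fderiv (hIopen.uniqueDiffOn z hz) (hA z hz).differentiableAt,
    (hA z hz).hasFDerivAt.fderiv]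
  ext
  simp

lemma mobius_core
    (I : Set ℝ) (hIopen : IsOpen I) (hIconv : Convex ℝ I) (hIne : I.Nonempty)
    (f g : ℝ → ℝ) (hf : ContDiffOn ℝ 3 f I) (hg : ContDiffOn ℝ 3 g I)
    (hf' : ∀ x ∈ I, 0 < deriv f x) (hg' : ∀ x ∈ I, 0 < deriv g x)
    (hS : ∀ x ∈ I,
      deriv (deriv (deriv f)) x / deriv f x
          - (3 / 2) * (deriv (deriv f) x / deriv f x) ^ 2 =
        deriv (deriv (deriv g)) x / deriv g x
          - (3 / 2) * (deriv (deriv g) x / deriv g x) ^ 2) :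
    ∃ a b c d : ℝ, a * d - b * c ≠ 0 ∧
      ∀ x ∈ I, f x = (a * g x + b) / (c * g x + d) := by
  obtain ⟨x0, hx0⟩ := hIne
  -- basic differentiability facts
  have hfc1 : ContDiffOn ℝ 2 (deriv f) I := hf.deriv_of_isOpen hIopen (by norm_num)
  have hfc2 : ContDiffOn ℝ 1 (deriv (deriv f)) I := hfc1.deriv_of_isOpen hIopen (by norm_num)
  have hgc1 : ContDiffOn ℝ 2 (deriv g) I := hg.deriv_of_isOpen hIopen (by norm_num)
  have hgc2 : ContDiffOn ℝ 1 (deriv (deriv g)) I := hgc1.deriv_of_isOpen hIopen (by norm_num)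
  have hdf : ∀ x ∈ I, HasDerivAt f (deriv f x) x := fun x hx =>
    ((hf.differentiableOn (by norm_num)).differentiableAt (hIopen.mem_nhds hx)).hasDerivAt
  have hdf1 : ∀ x ∈ I, HasDerivAt (deriv f) (deriv (deriv f) x) x := fun x hx =>
    ((hfc1.differentiableOn (by norm_num)).differentiableAt (hIopen.mem_nhds hx)).hasDerivAt
  have hdf2 : ∀ x ∈ I, HasDerivAt (deriv (deriv f)) (deriv (deriv (deriv f)) x) x := fun x hx =>
    ((hfc2.differentiableOn (by norm_num)).differentiableAt (hIopen.mem_nhds hx)).hasDerivAt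
  have hdg : ∀ x ∈ I, HasDerivAt g (deriv g x) x := fun x hx =>
    ((hg.differentiableOn (by norm_num)).differentiableAt (hIopen.mem_nhds hx)).hasDerivAt
  have hdg1 : ∀ x ∈ I, HasDerivAt (deriv g) (deriv (deriv g) x) x := fun x hx =>
    ((hgc1.differentiableOn (by norm_num)).differentiableAt (hIopen.mem_nhds hx)).hasDerivAt
  have hdg2 : ∀ x ∈ I, HasDerivAt (deriv (deriv g)) (deriv (deriv (deriv g)) x) x := fun x hx =>
    ((hgc2.differentiableOn (by norm_num)).differentiableAt (hIopen.mem_nhds hx)).hasDerivAt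
  have hdP : ∀ x ∈ I, HasDerivAt (schwP f) (schwP1 f x) x := fun x hx =>
    hasDerivAt_schwP (hdf1 x hx) (hf' x hx)
  have hdP1 : ∀ x ∈ I, HasDerivAt (schwP1 f) (schwP2 f x) x := fun x hx =>
    hasDerivAt_schwP1 (hdf1 x hx) (hdf2 x hx) (hf' x hx)
  have hdQ : ∀ x ∈ I, HasDerivAt (schwP g) (schwP1 g x) x := fun x hx =>
    hasDerivAt_schwP (hdg1 x hx) (hg' x hx)
  have hdQ1 : ∀ x ∈ I, HasDerivAt (schwP1 g) (schwP2 g x) x := fun x hx =>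
    hasDerivAt_schwP1 (hdg1 x hx) (hdg2 x hx) (hg' x hx)
  -- algebraic facts
  have hsf : ∀ x ∈ I, Real.sqrt (deriv f x) ≠ 0 := fun x hx =>
    (Real.sqrt_pos.mpr (hf' x hx)).ne'
  have hsg : ∀ x ∈ I, Real.sqrt (deriv g x) ≠ 0 := fun x hx =>
    (Real.sqrt_pos.mpr (hg' x hx)).ne'
  have hsqf : ∀ x ∈ I, Real.sqrt (deriv f x) ^ 2 = deriv f x := fun x hx =>
    Real.sq_sqrt (hf' x hx).le
  have hsqg : ∀ x ∈ I, Real.sqrt (deriv g x) ^ 2 = deriv g x := fun x hx =>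
    Real.sq_sqrt (hg' x hx).le
  have hnormf : ∀ x ∈ I, deriv f x * schwP f x ^ 2 = 1 := by
    intro x hx
    unfold schwP
    rw [← hsqf x hx]
    have := hsf x hx
    field_simp
    rw [Real.sqrt_sq (Real.sqrt_nonneg (deriv f x))]
  have hnormg : ∀ x ∈ I, deriv g x * schwP g x ^ 2 = 1 := by
    intro x hx
    unfold schwP
    rw [← hsqg x hx]
    have := hsg x hx
    field_simp
    rw [Real.sqrt_sq (Real.sqrt_nonneg (deriv g x))]
  have hmixf : ∀ x ∈ I, deriv (deriv f) x * schwP f x + 2 * deriv f x * schwP1 f x = 0 := by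
    intro x hx
    unfold schwP schwP1
    rw [← hsqf x hx]
    have := hsf x hx
    field_simp
    ring
  have hmixg : ∀ x ∈ I, deriv (deriv g) x * schwP g x + 2 * deriv g x * schwP1 g x = 0 := by
    intro x hx
    unfold schwP schwP1
    rw [← hsqg x hx]
    have := hsg x hx
    field_simp
    ring
  have hP2eq : ∀ x ∈ I, schwP2 f x =
      -((deriv (deriv (deriv f)) x / deriv f x
          - (3 / 2) * (deriv (deriv f) x / deriv f x) ^ 2) / 2) * schwP f x := by
    intro x hx
    unfold schwP schwP2
    rw [← hsqf x hx]
    have := hsf x hx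
    field_simp
    rw [Real.sqrt_sq (Real.sqrt_nonneg (deriv f x))]
    ring
  have hQ2eq : ∀ x ∈ I, schwP2 g x =
      -((deriv (deriv (deriv g)) x / deriv g x
          - (3 / 2) * (deriv (deriv g) x / deriv g x) ^ 2) / 2) * schwP g x := by
    intro x hx
    unfold schwP schwP2
    rw [← hsqg x hx]
    have := hsg x hx
    field_simp
    rw [Real.sqrt_sq (Real.sqrt_nonneg (deriv g x))]
    ring
  set A : ℝ → ℝ := fun x =>
    schwP g x * (deriv f x * schwP f x + f x * schwP1 f x) - schwP1 g x * (f x * schwP f x)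
    with hAdef
  set B : ℝ → ℝ := fun x =>
    f x * schwP f x * (deriv g x * schwP g x + g x * schwP1 g x) -
      (deriv f x * schwP f x + f x * schwP1 f x) * (g x * schwP g x) with hBdef
  set C : ℝ → ℝ := fun x =>
    schwP g x * schwP1 f x - schwP1 g x * schwP f x with hCdef
  set D : ℝ → ℝ := fun x =>
    schwP f x * (deriv g x * schwP g x + g x * schwP1 g x) - schwP1 f x * (g x * schwP g x)
    with hDdef
  have hAd : ∀ x ∈ I, HasDerivAt A 0 x := by
    intro x hx
    have h := ((hdQ x hx).mul (((hdf1 x hx).mul (hdP x hx)).add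
        ((hdf x hx).mul (hdP1 x hx)))).sub ((hdQ1 x hx).mul ((hdf x hx).mul (hdP x hx)))
    convert h using 1
    · rfl
    · rfl
    · rfl
    rw [hP2eq x hx, hQ2eq x hx, hS x hx]
    simp only [Pi.mul_apply, Pi.add_apply]
    linear_combination (-(schwP g x)) * hmixf x hx
  have hBd : ∀ x ∈ I, HasDerivAt B 0 x := by
    intro x hx
    have h := (((hdf x hx).mul (hdP x hx)).mul
        (((hdg1 x hx).mul (hdQ x hx)).add ((hdg x hx).mul (hdQ1 x hx)))).sub
        ((((hdf1 x hx).mul (hdP x hx)).add ((hdf x hx).mul (hdP1 x hx))).mul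
        ((hdg x hx).mul (hdQ x hx)))
    convert h using 1
    · rfl
    · rfl
    · rfl
    rw [hP2eq x hx, hQ2eq x hx, hS x hx]
    simp only [Pi.mul_apply, Pi.add_apply]
    linear_combination (g x * schwP g x) * hmixf x hx - (f x * schwP f x) * hmixg x hx
  have hCd : ∀ x ∈ I, HasDerivAt C 0 x := by
    intro x hx
    have h := ((hdQ x hx).mul (hdP1 x hx)).sub ((hdQ1 x hx).mul (hdP x hx))
    convert h using 1
    · rfl
    · rfl
    · rfl
    rw [hP2eq x hx, hQ2eq x hx, hS x hx]
    ring
  have hDd : ∀ x ∈ I, HasDerivAt D 0 x := by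
    intro x hx
    have h := ((hdP x hx).mul
        (((hdg1 x hx).mul (hdQ x hx)).add ((hdg x hx).mul (hdQ1 x hx)))).sub
        ((hdP1 x hx).mul ((hdg x hx).mul (hdQ x hx)))
    convert h using 1
    · rfl
    · rfl
    · rfl
    rw [hP2eq x hx, hQ2eq x hx, hS x hx]
    simp only [Pi.mul_apply, Pi.add_apply]
    linear_combination (-(schwP f x)) * hmixg x hx
  refine ⟨A x0, B x0, C x0, D x0, ?_, ?_⟩
  · have hdet : A x0 * D x0 - B x0 * C x0 =
        (deriv f x0 * schwP f x0 ^ 2) * (deriv g x0 * schwP g x0 ^ 2) := by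
      simp only [hAdef, hBdef, hCdef, hDdef]
      ring
    rw [hdet, hnormf x0 hx0, hnormg x0 hx0]
    norm_num
  · intro x hx
    have ha : A x = A x0 := const_of_hasDerivAt_zero hIopen hIconv hAd hx hx0
    have hb : B x = B x0 := const_of_hasDerivAt_zero hIopen hIconv hBd hx hx0
    have hc : C x = C x0 := const_of_hasDerivAt_zero hIopen hIconv hCd hx hx0
    have hd : D x = D x0 := const_of_hasDerivAt_zero hIopen hIconv hDd hx hx0
    have hp0 : schwP f x ≠ 0 := by
      unfold schwP
      exact inv_ne_zero (hsf x hx)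
    have hq0 : schwP g x ≠ 0 := by
      unfold schwP
      exact inv_ne_zero (hsg x hx)
    have e1 : (C x0 * g x + D x0) * schwP g x = schwP f x := by
      rw [← hc, ← hd]
      simp only [hCdef, hDdef]
      linear_combination (schwP f x) * hnormg x hx
    have e2 : (A x0 * g x + B x0) * schwP g x = f x * schwP f x := by
      rw [← ha, ← hb]
      simp only [hAdef, hBdef]
      linear_combination (f x * schwP f x) * hnormg x hx
    have hcd : C x0 * g x + D x0 ≠ 0 := by
      intro h0
      rw [h0, zero_mul] at e1
      exact hp0 e1.symm
    rw [eq_div_iff hcd]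
    apply mul_right_cancel₀ hq0
    linear_combination f x * e1 - e2

lemma sign_const {I : Set ℝ} (hIconv : Convex ℝ I) {h : ℝ → ℝ} (hc : ContinuousOn h I)
    (hne : ∀ x ∈ I, h x ≠ 0) : (∀ x ∈ I, 0 < h x) ∨ (∀ x ∈ I, h x < 0) := by
  by_contra hcon
  push_neg at hcon
  obtain ⟨⟨x, hx, hx0⟩, ⟨y, hy, hy0⟩⟩ := hcon
  have h1 : h x < 0 := lt_of_le_of_ne hx0 (hne x hx)
  have h2 : 0 < h y := lt_of_le_of_ne hy0 (Ne.symm (hne y hy))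
  obtain ⟨z, hz, hz0⟩ := hIconv.isPreconnected.intermediate_value hx hy hc ⟨h1.le, h2.le⟩
  exact hne z hz hz0

lemma schwarzian_neg (f : ℝ → ℝ) (x : ℝ) :
    deriv (deriv (deriv (fun y => -f y))) x / deriv (fun y => -f y) x -
        3 / 2 * (deriv (deriv (fun y => -f y)) x / deriv (fun y => -f y) x) ^ 2 =
      deriv (deriv (deriv f)) x / deriv f x -
        3 / 2 * (deriv (deriv f) x / deriv f x) ^ 2 := by
  have h1 : deriv (fun y => -f y) = fun y => -deriv f y := funext fun y => deriv.neg
  have h2 : deriv (deriv (fun y => -f y)) = fun y => -deriv (deriv f) y := by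
    rw [h1]; exact funext fun y => deriv.neg
  have h3 : deriv (deriv (deriv (fun y => -f y))) = fun y => -deriv (deriv (deriv f)) y := by
    rw [h2]; exact funext fun y => deriv.neg
  rw [h3, h2, h1]
  simp [neg_div_neg_eq]



/-- If two `C^3` functions with nowhere-vanishing derivatives on an open interval
have the same Schwarzian derivative, then one is a Möbius transform of the other. -/
theorem mobius_of_schwarzian_eq
    (I : Set ℝ) (hIopen : IsOpen I) (hIconv : Convex ℝ I) (hIne : I.Nonempty)
    (f g : ℝ → ℝ) (hf : ContDiffOn ℝ 3 f I) (hg : ContDiffOn ℝ 3 g I)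
    (hf' : ∀ x ∈ I, deriv f x ≠ 0) (hg' : ∀ x ∈ I, deriv g x ≠ 0)
    (hS : ∀ x ∈ I,
      deriv (deriv (deriv f)) x / deriv f x
          - (3 / 2) * (deriv (deriv f) x / deriv f x) ^ 2 =
        deriv (deriv (deriv g)) x / deriv g x
          - (3 / 2) * (deriv (deriv g) x / deriv g x) ^ 2) :
    ∃ a b c d : ℝ, a * d - b * c ≠ 0 ∧
      ∀ x ∈ I, f x = (a * g x + b) / (c * g x + d) := by
  have hfc : ContinuousOn (deriv f) I :=
    (hf.deriv_of_isOpen hIopen (m := 2) (by norm_num)).continuousOn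
  have hgc : ContinuousOn (deriv g) I :=
    (hg.deriv_of_isOpen hIopen (m := 2) (by norm_num)).continuousOn
  have hdnegf : deriv (fun y => -f y) = fun y => -deriv f y := funext fun y => deriv.neg
  have hdnegg : deriv (fun y => -g y) = fun y => -deriv g y := funext fun y => deriv.neg
  rcases sign_const hIconv hfc hf' with hfp | hfn
  · rcases sign_const hIconv hgc hg' with hgp | hgn
    · exact mobius_core I hIopen hIconv hIne f g hf hg hfp hgp hS
    · -- g' < 0 : use -g
      have hgp' : ∀ x ∈ I, 0 < deriv (fun y => -g y) x := by
        intro x hx; rw [hdnegg]; simpa using hgn x hx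
      have hS' : ∀ x ∈ I,
          deriv (deriv (deriv f)) x / deriv f x
              - (3 / 2) * (deriv (deriv f) x / deriv f x) ^ 2 =
            deriv (deriv (deriv (fun y => -g y))) x / deriv (fun y => -g y) x
              - (3 / 2) * (deriv (deriv (fun y => -g y)) x / deriv (fun y => -g y) x) ^ 2 := by
        intro x hx; rw [schwarzian_neg g x]; exact hS x hx
      obtain ⟨a, b, c, d, hdet, heq⟩ :=
        mobius_core I hIopen hIconv hIne f (fun y => -g y) hf hg.neg hfp hgp' hS'
      refine ⟨-a, b, -c, d, by intro h0; apply hdet; linarith, fun x hx => ?_⟩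
      rw [show -a * g x + b = a * -g x + b by ring, show -c * g x + d = c * -g x + d by ring]
      exact heq x hx
  · rcases sign_const hIconv hgc hg' with hgp | hgn
    · -- f' < 0 : use -f
      have hfp' : ∀ x ∈ I, 0 < deriv (fun y => -f y) x := by
        intro x hx; rw [hdnegf]; simpa using hfn x hx
      have hS' : ∀ x ∈ I,
          deriv (deriv (deriv (fun y => -f y))) x / deriv (fun y => -f y) x
              - (3 / 2) * (deriv (deriv (fun y => -f y)) x / deriv (fun y => -f y) x) ^ 2 =
            deriv (deriv (deriv g)) x / deriv g x
              - (3 / 2) * (deriv (deriv g) x / deriv g x) ^ 2 := by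
        intro x hx; rw [schwarzian_neg f x]; exact hS x hx
      obtain ⟨a, b, c, d, hdet, heq⟩ :=
        mobius_core I hIopen hIconv hIne (fun y => -f y) g hf.neg hg hfp' hgp hS'
      refine ⟨-a, -b, c, d, by intro h0; apply hdet; linarith, fun x hx => ?_⟩
      have h := heq x hx
      have : f x = -((a * g x + b) / (c * g x + d)) := by linarith
      rw [this, ← neg_div, show -(a * g x + b) = -a * g x + -b by ring]
    · -- both negative
      have hfp' : ∀ x ∈ I, 0 < deriv (fun y => -f y) x := by
        intro x hx; rw [hdnegf]; simpa using hfn x hx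
      have hgp' : ∀ x ∈ I, 0 < deriv (fun y => -g y) x := by
        intro x hx; rw [hdnegg]; simpa using hgn x hx
      have hS' : ∀ x ∈ I,
          deriv (deriv (deriv (fun y => -f y))) x / deriv (fun y => -f y) x
              - (3 / 2) * (deriv (deriv (fun y => -f y)) x / deriv (fun y => -f y) x) ^ 2 =
            deriv (deriv (deriv (fun y => -g y))) x / deriv (fun y => -g y) x
              - (3 / 2) * (deriv (deriv (fun y => -g y)) x / deriv (fun y => -g y) x) ^ 2 := by
        intro x hx; rw [schwarzian_neg f x, schwarzian_neg g x]; exact hS x hx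
      obtain ⟨a, b, c, d, hdet, heq⟩ :=
        mobius_core I hIopen hIconv hIne (fun y => -f y) (fun y => -g y)
          hf.neg hg.neg hfp' hgp' hS'
      refine ⟨a, -b, -c, d, by intro h0; apply hdet; linarith, fun x hx => ?_⟩
      have h := heq x hx
      have : f x = -((a * -g x + b) / (c * -g x + d)) := by linarith
      rw [this, ← neg_div, show -(a * -g x + b) = a * g x + -b by ring,
        show c * -g x + d = -c * g x + d by ring]
end

section
/- Pathwise comparison with a reflected version: let β be a Brownian motion, T_f locally Lipschitz, X solve X_t = X_0 + β_t − ∫_0^t (1/2)T_f(X_u)du, and X' solve the Skorokhod-type equation X'_t = X_0 + β_t − ∫_0^t (1/2)T_f(X'_u)du + 2(J'_t − J'_0), where J' is nondecreasing, J'_0 ∈ (0, X_0], X'_t ≥ J'_t, and J' increases only when X' = J'. Then X_t ≤ X'_t for all t ≥ 0 almost surely. -/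
open MeasureTheory intervalIntegral

section Aux
open Set Filter Topology

lemma pathwise_comparison_det
    (g B X X' J : ℝ → ℝ)
    (hX : Continuous X) (hX' : Continuous X')
    (hb : ∀ T > (0:ℝ), ∃ a b : ℝ, 0 < a ∧
      ∀ t ∈ Set.Icc (0:ℝ) T, X t ∈ Set.Icc a b ∧ X' t ∈ Set.Icc a b)
    (hlip : ∀ K : Set ℝ, IsCompact K → K ⊆ Set.Ioi (0:ℝ) →
      ∃ L : NNReal, LipschitzOnWith L g K)
    (hXeq : ∀ t ≥ (0:ℝ), X t = X 0 + B t - ∫ u in (0:ℝ)..t, (1/2) * g (X u))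
    (hX'eq : ∀ t ≥ (0:ℝ), X' t = X 0 + B t - (∫ u in (0:ℝ)..t, (1/2) * g (X' u))
        + 2 * (J t - J 0))
    (hJ : Monotone J) :
    ∀ t ≥ (0:ℝ), X t ≤ X' t := by
  intro t ht
  by_contra hlt
  push_neg at hlt
  -- X' 0 = X 0
  have hB0 : B 0 = 0 := by
    have h1 := hXeq 0 le_rfl
    simp [intervalIntegral.integral_same] at h1
    linarith
  have hX'0 : X' 0 = X 0 := by
    have h2 := hX'eq 0 le_rfl
    simp [intervalIntegral.integral_same, hB0] at h2
    linarith
  have ht0 : 0 < t := by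
    rcases lt_or_eq_of_le ht with h | h
    · exact h
    · exfalso; rw [← h, hX'0] at hlt; exact lt_irrefl _ hlt
  obtain ⟨a, b, ha, hab⟩ := hb t ht0
  have hKsub : Set.Icc a b ⊆ Set.Ioi (0:ℝ) := fun x hx => lt_of_lt_of_le ha hx.1
  obtain ⟨L, hL⟩ := hlip (Set.Icc a b) isCompact_Icc hKsub
  have hgcont : ContinuousOn g (Set.Icc a b) := hL.continuousOn
  set D : ℝ → ℝ := fun u => X u - X' u with hDdef
  clear_value D
  have hDcont : Continuous D := by rw [hDdef]; exact hX.sub hX'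
  have hGX : ContinuousOn (fun v => (1/2) * g (X v)) (Set.Icc 0 t) :=
    continuousOn_const.mul (hgcont.comp hX.continuousOn (fun v hv => (hab v hv).1))
  have hGX' : ContinuousOn (fun v => (1/2) * g (X' v)) (Set.Icc 0 t) :=
    continuousOn_const.mul (hgcont.comp hX'.continuousOn (fun v hv => (hab v hv).2))
  have hint : ∀ {h : ℝ → ℝ}, ContinuousOn h (Set.Icc 0 t) → ∀ s u : ℝ,
      0 ≤ s → s ≤ u → u ≤ t → IntervalIntegrable h volume s u := by
    intro h hc s u hs hsu hut
    exact (hc.mono (by rw [Set.uIcc_of_le hsu]; exact Set.Icc_subset_Icc hs hut)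
      ).intervalIntegrable
  -- key identity
  have hkey : ∀ s u : ℝ, 0 ≤ s → s ≤ u → u ≤ t →
      D u - D s = (∫ v in s..u, ((1/2) * g (X' v) - (1/2) * g (X v)))
        - 2 * (J u - J s) := by
    intro s u hs hsu hut
    have hs' : (0:ℝ) ≤ u := hs.trans hsu
    have e1 : (∫ v in (0:ℝ)..s, (1/2) * g (X v)) + (∫ v in s..u, (1/2) * g (X v))
        = ∫ v in (0:ℝ)..u, (1/2) * g (X v) :=
      intervalIntegral.integral_add_adjacent_intervals
        (hint hGX 0 s le_rfl hs (hsu.trans hut)) (hint hGX s u hs hsu hut)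
    have e2 : (∫ v in (0:ℝ)..s, (1/2) * g (X' v)) + (∫ v in s..u, (1/2) * g (X' v))
        = ∫ v in (0:ℝ)..u, (1/2) * g (X' v) :=
      intervalIntegral.integral_add_adjacent_intervals
        (hint hGX' 0 s le_rfl hs (hsu.trans hut)) (hint hGX' s u hs hsu hut)
    have e3 : (∫ v in s..u, ((1/2) * g (X' v) - (1/2) * g (X v)))
        = (∫ v in s..u, (1/2) * g (X' v)) - (∫ v in s..u, (1/2) * g (X v)) :=
      intervalIntegral.integral_sub (hint hGX' s u hs hsu hut) (hint hGX s u hs hsu hut)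
    have h1 := hXeq u hs'
    have h2 := hXeq s hs
    have h3 := hX'eq u hs'
    have h4 := hX'eq s hs
    simp only [hDdef]
    rw [h1, h2, h3, h4, e3]
    linarith [e1, e2]
  -- the set where D ≤ 0
  set S : Set ℝ := Set.Icc 0 t ∩ D ⁻¹' (Set.Iic 0) with hSdef
  have hD0 : D 0 = 0 := by simp [hDdef, hX'0]
  have h0S : (0:ℝ) ∈ S := ⟨⟨le_rfl, ht0.le⟩, by simp [hD0]⟩
  have hbdd : BddAbove S := ⟨t, fun u hu => hu.1.2⟩
  have hSclosed : IsClosed S := isClosed_Icc.inter (isClosed_Iic.preimage hDcont)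
  set s := sSup S with hsdef
  clear_value s
  have hsmem : s ∈ S := by rw [hsdef]; exact hSclosed.csSup_mem ⟨0, h0S⟩ hbdd
  have hs0 : (0:ℝ) ≤ s := hsmem.1.1
  have hst : s ≤ t := hsmem.1.2
  have hDs : D s ≤ 0 := hsmem.2
  have hDt : 0 < D t := by simp only [hDdef]; exact sub_pos.mpr hlt
  have hslt : s < t := by
    rcases lt_or_eq_of_le hst with h | h
    · exact h
    · exfalso; rw [h] at hDs; linarith
  have hpos : ∀ u, s < u → u ≤ t → 0 < D u := by
    intro u h1 h2
    by_contra h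
    push_neg at h
    exact absurd (le_csSup hbdd ⟨⟨hs0.trans h1.le, h2⟩, h⟩) (not_le.mpr (hsdef ▸ h1))
  have hDsz : D s = 0 := by
    have hne : (𝓝[>] s).NeBot := nhdsGT_neBot s
    have htd : Tendsto D (𝓝[>] s) (𝓝 (D s)) :=
      (hDcont.tendsto s).mono_left nhdsWithin_le_nhds
    have hev : ∀ᶠ u in 𝓝[>] s, 0 ≤ D u := by
      filter_upwards [Ioo_mem_nhdsGT_of_mem (Set.left_mem_Ico.mpr hslt)] with u hu
      exact (hpos u hu.1 hu.2.le).le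
    have : 0 ≤ D s := ge_of_tendsto htd hev
    linarith
  have hDnn : ∀ u ∈ Set.Icc s t, 0 ≤ D u := by
    intro u hu
    rcases eq_or_lt_of_le hu.1 with h | h
    · rw [← h, hDsz]
    · exact (hpos u h hu.2).le
  -- key inequality
  have hkey2 : ∀ u ∈ Set.Icc s t, D u ≤ ((L:ℝ)/2) * ∫ v in s..u, D v := by
    intro u hu
    have hsu : s ≤ u := hu.1
    have hut : u ≤ t := hu.2
    have hmono : (∫ v in s..u, ((1/2) * g (X' v) - (1/2) * g (X v)))
        ≤ ∫ v in s..u, ((L:ℝ)/2) * D v := by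
      apply intervalIntegral.integral_mono_on hsu
      · exact ((hGX'.mono (Set.Icc_subset_Icc hs0 hut)).sub
          (hGX.mono (Set.Icc_subset_Icc hs0 hut))).intervalIntegrable_of_Icc hsu
      · exact (continuousOn_const.mul
          ((hDcont.continuousOn).mono (Set.subset_univ _))).intervalIntegrable_of_Icc hsu
      · intro v hv
        have hv0 : v ∈ Set.Icc (0:ℝ) t := ⟨hs0.trans hv.1, hv.2.trans hut⟩
        have hXv : X v ∈ Set.Icc a b := (hab v hv0).1
        have hX'v : X' v ∈ Set.Icc a b := (hab v hv0).2
        have hdist := hL.dist_le_mul (X' v) hX'v (X v) hXv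
        rw [Real.dist_eq, Real.dist_eq] at hdist
        have hDv : 0 ≤ D v := hDnn v ⟨hv.1, hv.2.trans hut⟩
        have hDv' : 0 ≤ X v - X' v := by simpa [hDdef] using hDv
        have habs : |X' v - X v| = D v := by
          simp only [hDdef]; rw [abs_sub_comm]; exact abs_of_nonneg hDv'
        rw [habs] at hdist
        have : (1/2) * g (X' v) - (1/2) * g (X v) ≤ (1/2) * |g (X' v) - g (X v)| := by
          have := le_abs_self (g (X' v) - g (X v))
          linarith
        have h2 : (1/2:ℝ) * |g (X' v) - g (X v)| ≤ (1/2) * ((L:ℝ) * D v) :=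
          mul_le_mul_of_nonneg_left hdist (by norm_num)
        calc (1/2) * g (X' v) - (1/2) * g (X v) ≤ (1/2) * |g (X' v) - g (X v)| := this
          _ ≤ (1/2) * ((L:ℝ) * D v) := h2
          _ = ((L:ℝ)/2) * D v := by ring
    have hid := hkey s u hs0 hsu hut
    have hJm : 0 ≤ J u - J s := sub_nonneg.mpr (hJ hsu)
    have hci : (∫ v in s..u, ((L:ℝ)/2) * D v) = ((L:ℝ)/2) * ∫ v in s..u, D v :=
      intervalIntegral.integral_const_mul _ _
    rw [hci] at hmono
    linarith
  -- Gronwall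
  set F : ℝ → ℝ := fun u => ∫ v in s..u, D v with hFdef
  clear_value F
  have hDint : ∀ u, IntervalIntegrable D volume s u := fun u =>
    hDcont.intervalIntegrable s u
  have hFderiv : ∀ u ∈ Set.Ico s t, HasDerivWithinAt F (D u) (Set.Ici u) u := by
    intro u _
    rw [hFdef]
    exact (intervalIntegral.integral_hasDerivAt_right (hDint u)
      (hDcont.stronglyMeasurableAtFilter _ _) (hDcont.continuousAt)).hasDerivWithinAt
  have hFnn : ∀ u ∈ Set.Icc s t, 0 ≤ F u := by
    intro u hu
    rw [hFdef]
    apply intervalIntegral.integral_nonneg hu.1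
    intro v hv
    exact hDnn v ⟨hv.1, hv.2.trans hu.2⟩
  have hFcont : ContinuousOn F (Set.Icc s t) := by
    rw [hFdef]
    exact (intervalIntegral.continuous_primitive (fun a b => hDcont.intervalIntegrable a b)
      s).continuousOn
  have hFs : ‖F s‖ ≤ 0 := by
    simp [hFdef, intervalIntegral.integral_same]
  have hbound : ∀ u ∈ Set.Ico s t, ‖D u‖ ≤ ((L:ℝ)/2) * ‖F u‖ + 0 := by
    intro u hu
    have hu' : u ∈ Set.Icc s t := ⟨hu.1, hu.2.le⟩
    rw [Real.norm_eq_abs, Real.norm_eq_abs, abs_of_nonneg (hDnn u hu'),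
      abs_of_nonneg (hFnn u hu'), add_zero]
    rw [hFdef]; exact hkey2 u hu'
  have hgron := norm_le_gronwallBound_of_norm_deriv_right_le hFcont hFderiv hFs hbound
  have hFt : ‖F t‖ ≤ 0 := by
    have h := hgron t ⟨hst, le_rfl⟩
    rw [gronwallBound_ε0] at h
    simpa using h
  have hFt0 : F t = 0 := le_antisymm (le_of_abs_le (by rwa [Real.norm_eq_abs] at hFt))
    (hFnn t ⟨hst, le_rfl⟩)
  have hfin := hkey2 t ⟨hst, le_rfl⟩
  have hFteq : F t = ∫ v in s..t, D v := by rw [hFdef]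
  rw [← hFteq, hFt0] at hfin
  linarith

end Aux


/-- Pathwise comparison with a reflected version (Lemma on pathwise comparison):
if `X` solves `X_t = X_0 + β_t − ∫₀ᵗ (1/2)T_f(X_u) du` and `X'` solves the
Skorokhod-type equation
`X'_t = X_0 + β_t − ∫₀ᵗ (1/2)T_f(X'_u) du + 2(J'_t − J'_0)` with `J'`
nondecreasing, `J'_0 ∈ (0, X_0]`, `X' ≥ J'`, `J'` increasing only when
`X' = J'`, and `T_f = f''/f'` locally Lipschitz on `(0,∞)`, then `X ≤ X'`
for all times, almost surely. -/
theorem pathwise_comparison_reflected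
    {Ω : Type*} [MeasurableSpace Ω] (μ : Measure Ω) [IsProbabilityMeasure μ]
    (f : ℝ → ℝ) (hf : ContDiffOn ℝ 3 f (Set.Ioi 0))
    (hf' : ∀ x ∈ Set.Ioi (0 : ℝ), deriv f x ≠ 0)
    (hlip : ∀ K : Set ℝ, IsCompact K → K ⊆ Set.Ioi (0 : ℝ) →
      ∃ L : NNReal, LipschitzOnWith L (fun x => deriv (deriv f) x / deriv f x) K)
    (β X X' J' : Ω → ℝ → ℝ)
    (hβ : ∀ᵐ ω ∂μ, Continuous (β ω) ∧ β ω 0 = 0)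
    (hcont : ∀ᵐ ω ∂μ, Continuous (X ω) ∧ Continuous (X' ω) ∧ Continuous (J' ω))
    (hbounds : ∀ᵐ ω ∂μ, ∀ T > (0 : ℝ), ∃ a b : ℝ, 0 < a ∧
      ∀ t ∈ Set.Icc (0 : ℝ) T, X ω t ∈ Set.Icc a b ∧ X' ω t ∈ Set.Icc a b)
    (hXeq : ∀ᵐ ω ∂μ, ∀ t ≥ (0 : ℝ),
      X ω t = X ω 0 + β ω t
        - ∫ u in (0 : ℝ)..t, (1 / 2) * (deriv (deriv f) (X ω u) / deriv f (X ω u)))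
    (hX'eq : ∀ᵐ ω ∂μ, ∀ t ≥ (0 : ℝ),
      X' ω t = X ω 0 + β ω t
        - (∫ u in (0 : ℝ)..t, (1 / 2) * (deriv (deriv f) (X' ω u) / deriv f (X' ω u)))
        + 2 * (J' ω t - J' ω 0))
    (hJmono : ∀ᵐ ω ∂μ, Monotone (J' ω))
    (hJ0 : ∀ᵐ ω ∂μ, J' ω 0 ∈ Set.Ioc (0 : ℝ) (X ω 0))
    (hJle : ∀ᵐ ω ∂μ, ∀ t ≥ (0 : ℝ), J' ω t ≤ X' ω t)
    (hflat : ∀ᵐ ω ∂μ, ∀ s t : ℝ, 0 ≤ s → s ≤ t →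
      (∀ u ∈ Set.Icc s t, J' ω u < X' ω u) → J' ω t = J' ω s) :
    ∀ᵐ ω ∂μ, ∀ t ≥ (0 : ℝ), X ω t ≤ X' ω t := by
  filter_upwards [hcont, hbounds, hXeq, hX'eq, hJmono] with ω h2 h3 h4 h5 h6
  exact pathwise_comparison_det (fun x => deriv (deriv f) x / deriv f x)
    (β ω) (X ω) (X' ω) (J' ω) h2.1 h2.2.1 h3 hlip h4 h5 h6
end
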